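/- For all integers l ≥ 1 and m ≥ 1, Σ_{n = max(l, m)}^{l + m} (−1)^{n−1} · (n−1)! / ((n−l)! · (n−m)! · (l+m−n)!) = 0, as an identity of rational numbers. -/

import Mathlib

namespace JoyceIII

open Finset

/-- `Σ_{j=0}^m (-1)^j C(m,j) C(j,k) = 0` for `k < m` (in ℚ). -/
lemma aux_choose_choose (m k : ℕ) (hk : k < m) :
    ∑ j ∈ range (m + 1), (-1 : ℚ) ^ j * (m.choose j : ℚ) * (j.choose k : ℚ) = 0 := by
  have hsplit : range (m + 1) = range k ∪ Ico k (m + 1) := by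
    rw [Finset.range_eq_Ico, Finset.range_eq_Ico, Finset.Ico_union_Ico_eq_Ico (Nat.zero_le k) (show k ≤ m + 1 by omega)]
  rw [hsplit, Finset.sum_union (by
    rw [Finset.range_eq_Ico]; exact Finset.Ico_disjoint_Ico_consecutive 0 k (m+1))]
  have h0 : ∑ j ∈ range k, (-1 : ℚ) ^ j * (m.choose j : ℚ) * (j.choose k : ℚ) = 0 := by
    apply Finset.sum_eq_zero
    intro j hj
    rw [Finset.mem_range] at hj
    rw [Nat.choose_eq_zero_of_lt hj]
    simp
  rw [h0, zero_add]
  have key : ∀ j ∈ Ico k (m + 1),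
      (-1 : ℚ) ^ j * (m.choose j : ℚ) * (j.choose k : ℚ) =
      (m.choose k : ℚ) * ((-1 : ℚ) ^ j * ((m - k).choose (j - k) : ℚ)) := by
    intro j hj
    rw [Finset.mem_Ico] at hj
    have hjm : j ≤ m := by omega
    have := Nat.choose_mul (n := m) hj.1
    have hcast : (m.choose j : ℚ) * (j.choose k : ℚ) =
        (m.choose k : ℚ) * ((m - k).choose (j - k) : ℚ) := by
      exact_mod_cast congrArg (Nat.cast : ℕ → ℚ) this
    rw [mul_assoc, hcast]; ring
  rw [Finset.sum_congr rfl key, ← Finset.mul_sum, Finset.sum_Ico_eq_sum_range]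
  have h2 : ∀ i ∈ range (m + 1 - k),
      (-1 : ℚ) ^ (k + i) * (((m - k).choose (k + i - k)) : ℚ) =
      (-1 : ℚ) ^ k * ((-1 : ℚ) ^ i * (((m - k).choose i) : ℚ)) := by
    intro i _
    rw [Nat.add_sub_cancel_left, pow_add]; ring
  rw [Finset.sum_congr rfl h2, ← Finset.mul_sum]
  have hmk : m + 1 - k = (m - k) + 1 := by omega
  rw [hmk]
  have := Int.alternating_sum_range_choose_of_ne (n := m - k) (by omega)
  have hz : ∑ i ∈ range (m - k + 1), (-1 : ℚ) ^ i * (((m - k).choose i) : ℚ) = 0 := by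
    exact_mod_cast congrArg (Int.cast : ℤ → ℚ) this
  rw [hz, mul_zero, mul_zero]

/-- `Σ_{j=0}^m (-1)^j C(m,j) C(l-1+j, m-1) = 0` for `m ≥ 1` (in ℚ), by Vandermonde. -/
lemma aux_vandermonde (l m : ℕ) (hm : 1 ≤ m) :
    ∑ j ∈ range (m + 1), (-1 : ℚ) ^ j * (m.choose j : ℚ) * (((l - 1) + j).choose (m - 1) : ℚ)
      = 0 := by
  have key : ∀ j ∈ range (m + 1),
      (-1 : ℚ) ^ j * (m.choose j : ℚ) * (((l - 1) + j).choose (m - 1) : ℚ) =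
      ∑ ij ∈ Finset.HasAntidiagonal.antidiagonal (m - 1),
        ((l - 1).choose ij.1 : ℚ) *
          ((-1 : ℚ) ^ j * (m.choose j : ℚ) * (j.choose ij.2 : ℚ)) := by
    intro j _
    rw [Nat.add_choose_eq]
    push_cast
    rw [Finset.mul_sum]
    apply Finset.sum_congr rfl
    intro ij _
    ring
  rw [Finset.sum_congr rfl key, Finset.sum_comm]
  apply Finset.sum_eq_zero
  intro ij hij
  rw [← Finset.mul_sum]
  have hij2 : ij.2 < m := by
    rw [Finset.HasAntidiagonal.mem_antidiagonal] at hij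
    omega
  rw [aux_choose_choose m ij.2 hij2, mul_zero]

/-- The combinatorial identity at the end of the proof of Theorem 7.7:
for `l, m ≥ 1`,
`Σ_{n = max(l,m)}^{l+m} (−1)^{n−1} (n−1)! / ((n−l)! (n−m)! (l+m−n)!) = 0`. -/
theorem alternating_factorial_sum_eq_zero (l m : ℕ) (hl : 1 ≤ l) (hm : 1 ≤ m) :
    ∑ n ∈ Finset.Icc (max l m) (l + m),
      (-1 : ℚ) ^ (n - 1) * ((n - 1).factorial : ℚ) /
        (((n - l).factorial : ℚ) * ((n - m).factorial : ℚ) *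
          ((l + m - n).factorial : ℚ)) = 0 := by
  -- Step 1: rewrite each term in terms of binomial coefficients.
  have step1 : ∀ n ∈ Finset.Icc (max l m) (l + m),
      (-1 : ℚ) ^ (n - 1) * ((n - 1).factorial : ℚ) /
        (((n - l).factorial : ℚ) * ((n - m).factorial : ℚ) *
          ((l + m - n).factorial : ℚ)) =
      (-1 : ℚ) ^ (n - 1) * ((n - 1).choose (m - 1) : ℚ) * ((m.choose (n - l)) : ℚ) / m := by
    intro n hn
    rw [Finset.mem_Icc] at hn
    obtain ⟨hn1, hn2⟩ := hn
    have hln : l ≤ n := le_trans (le_max_left l m) hn1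
    have hmn : m ≤ n := le_trans (le_max_right l m) hn1
    rw [Nat.cast_choose ℚ (show m - 1 ≤ n - 1 by omega),
        Nat.cast_choose ℚ (show n - l ≤ m by omega)]
    have e1 : n - 1 - (m - 1) = n - m := by omega
    have e2 : m - (n - l) = l + m - n := by omega
    have e3 : m = (m - 1) + 1 := by omega
    rw [e1, e2]
    have hm1 : ((m - 1).factorial : ℚ) ≠ 0 := by exact_mod_cast (m-1).factorial_ne_zero
    have h2 : ((n - m).factorial : ℚ) ≠ 0 := by exact_mod_cast (n-m).factorial_ne_zero
    have h3 : ((n - l).factorial : ℚ) ≠ 0 := by exact_mod_cast (n-l).factorial_ne_zero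
    have h4 : ((l + m - n).factorial : ℚ) ≠ 0 := by exact_mod_cast (l+m-n).factorial_ne_zero
    have hmfac : (m.factorial : ℚ) = m * ((m - 1).factorial : ℚ) := by
      have := Nat.mul_factorial_pred (show m ≠ 0 by omega)
      exact_mod_cast (congrArg (Nat.cast : ℕ → ℚ) this).symm
    have hm0 : (m : ℚ) ≠ 0 := by exact_mod_cast Nat.one_le_iff_ne_zero.mp hm
    rw [hmfac]
    field_simp
  rw [Finset.sum_congr rfl step1]
  -- Step 2: extend the sum to Icc l (l+m); extra terms vanish.
  have step2 : ∑ n ∈ Finset.Icc (max l m) (l + m),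
      (-1 : ℚ) ^ (n - 1) * ((n - 1).choose (m - 1) : ℚ) * ((m.choose (n - l)) : ℚ) / m =
      ∑ n ∈ Finset.Icc l (l + m),
      (-1 : ℚ) ^ (n - 1) * ((n - 1).choose (m - 1) : ℚ) * ((m.choose (n - l)) : ℚ) / m := by
    apply Finset.sum_subset
    · intro x hx
      rw [Finset.mem_Icc] at hx ⊢
      exact ⟨le_trans (le_max_left l m) hx.1, hx.2⟩
    · intro x hx hx'
      rw [Finset.mem_Icc] at hx
      rw [Finset.mem_Icc, not_and_or] at hx'
      have hxm : x < m := by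
        rcases hx' with h | h
        · have := hx.1; omega
        · omega
      rw [Nat.choose_eq_zero_of_lt (by omega)]
      simp
  rw [step2]
  -- Step 3: reindex by n = l + i.
  have step3 : Finset.Icc l (l + m) = Finset.Ico l (l + m + 1) := by
    rw [Finset.Ico_add_one_right_eq_Icc]
  rw [step3, Finset.sum_Ico_eq_sum_range]
  have e4 : l + m + 1 - l = m + 1 := by omega
  rw [e4]
  have step4 : ∀ i ∈ range (m + 1),
      (-1 : ℚ) ^ (l + i - 1) * (((l + i - 1).choose (m - 1)) : ℚ) *
        ((m.choose (l + i - l)) : ℚ) / m =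
      ((-1 : ℚ) ^ (l - 1) / m) *
        ((-1 : ℚ) ^ i * (m.choose i : ℚ) * (((l - 1) + i).choose (m - 1) : ℚ)) := by
    intro i _
    have e5 : l + i - 1 = (l - 1) + i := by omega
    have e6 : l + i - l = i := by omega
    rw [e5, e6, pow_add]
    ring
  rw [Finset.sum_congr rfl step4, ← Finset.mul_sum, aux_vandermonde l m hm, mul_zero]

end JoyceIII
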